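/- Let K be the simplest cubic field with a ≥ 0 and O_K = Z[ρ]. Every element of the form -v - wρ + (v+2)ρ^2 with 0 ≤ v ≤ a and (v+1)(a+1)+1 ≤ w ≤ (v+1)(a+2) is decomposable: it equals [-v - (a+1)(v+1)ρ + (v+1)ρ^2] + [-(w - (a+1)(v+1))ρ + ρ^2], and both summands are totally positive. -/
import Mathlib


set_option maxHeartbeats 1000000 in
theorem simplest_cubic_decomposable (a : ℤ) (ha : 0 ≤ a) (ρ ρ' ρ'' : ℝ)
    (hρ : ρ^3 - a*ρ^2 - (a+3)*ρ - 1 = 0)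
    (hρ' : ρ'^3 - a*ρ'^2 - (a+3)*ρ' - 1 = 0)
    (hρ'' : ρ''^3 - a*ρ''^2 - (a+3)*ρ'' - 1 = 0)
    (hb1 : (a:ℝ) + 1 < ρ) (hb2 : -2 < ρ' ∧ ρ' < -1) (hb3 : -1 < ρ'' ∧ ρ'' < 0)
    (v w : ℤ) (hv : 0 ≤ v ∧ v ≤ a)
    (hw : (v+1)*(a+1) + 1 ≤ w ∧ w ≤ (v+1)*(a+2)) :
    -- the element decomposes as the sum of the two summands
    (-(v:ℝ) - w*ρ + (v+2)*ρ^2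
      = (-(v:ℝ) - (a+1)*(v+1)*ρ + (v+1)*ρ^2)
        + (-((w:ℝ) - (a+1)*(v+1))*ρ + ρ^2)) ∧
    -- and both summands are totally positive
    (∀ r ∈ ({ρ, ρ', ρ''} : Set ℝ),
      0 < -(v:ℝ) - (a+1)*(v+1)*r + (v+1)*r^2 ∧
      0 < -((w:ℝ) - (a+1)*(v+1))*r + r^2) := by
  obtain ⟨hv0, hva⟩ := hv
  obtain ⟨hw1, hw2⟩ := hw
  have ha' : (0:ℝ) ≤ (a:ℝ) := by exact_mod_cast ha
  have hv0' : (0:ℝ) ≤ (v:ℝ) := by exact_mod_cast hv0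
  have hva' : (v:ℝ) ≤ (a:ℝ) := by exact_mod_cast hva
  have hw1' : ((v:ℝ)+1)*((a:ℝ)+1)+1 ≤ (w:ℝ) := by exact_mod_cast hw1
  have hw2' : (w:ℝ) ≤ ((v:ℝ)+1)*((a:ℝ)+2) := by exact_mod_cast hw2
  have hρpos : 0 < ρ := by linarith
  have hub : ρ < (a:ℝ) + 2 := by nlinarith [hρ, hb1, ha', sq_nonneg ρ, sq_nonneg (ρ - ((a:ℝ)+2))]
  have hc1 : (1:ℝ) ≤ (w:ℝ) - ((a:ℝ)+1)*((v:ℝ)+1) := by nlinarith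
  have hc2 : (w:ℝ) - ((a:ℝ)+1)*((v:ℝ)+1) ≤ (v:ℝ)+1 := by nlinarith
  -- the Galois relation ρ''*(1+ρ) = -1
  have hE3 : ρ''^2 + (ρ-(a:ℝ))*ρ'' + (ρ^2-(a:ℝ)*ρ-((a:ℝ)+3)) = 0 := by
    have h1 : (ρ''-ρ)*(ρ''^2 + (ρ-(a:ℝ))*ρ'' + (ρ^2-(a:ℝ)*ρ-((a:ℝ)+3))) = 0 := by
      linear_combination hρ'' - hρ
    have hne : ρ'' - ρ ≠ 0 := by
      have : ρ'' < ρ := by linarith [hb3.2]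
      intro h; nlinarith [this]
    rcases mul_eq_zero.mp h1 with h | h
    · exact absurd h hne
    · exact h
  have hcr : (ρ^2-(a:ℝ)*ρ-((a:ℝ)+3))*(1+ρ)*ρ = 1+ρ := by linear_combination (1+ρ)*hρ
  have h2 : (ρ''*(1+ρ)+1)*(ρ'' + (ρ^2-(a:ℝ)*ρ-((a:ℝ)+3))*(1+ρ)) = 0 := by
    linear_combination (1+ρ)*hE3 + ρ''*(2+ρ)*hρ
  have hpos2 : 0 < ρ'' + (ρ^2-(a:ℝ)*ρ-((a:ℝ)+3))*(1+ρ) := by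
    nlinarith [hcr, hρpos, mul_pos hρpos (show (0:ℝ) < ρ''+1 by linarith [hb3.1])]
  have hkey : ρ''*(1+ρ)+1 = 0 := by
    rcases mul_eq_zero.mp h2 with h | h
    · exact h
    · exfalso; linarith
  clear hρ' hρ'' hE3 hcr h2 hpos2 hw1 hw2 hv0 hva ha
  refine ⟨by ring, ?_⟩
  intro r hr
  simp only [Set.mem_insert_iff, Set.mem_singleton_iff] at hr
  rcases hr with h | h | h <;> rw [h]
  · -- r = ρ
    constructor
    · have hA : (-(v:ℝ) - ((a:ℝ)+1)*((v:ℝ)+1)*ρ + ((v:ℝ)+1)*ρ^2)*ρ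
          = -((v:ℝ)+1)*ρ^2 + (((v:ℝ)+1)*((a:ℝ)+2)+1)*ρ + ((v:ℝ)+1) := by
        linear_combination ((v:ℝ)+1)*hρ
      have hRHS : 0 < -((v:ℝ)+1)*ρ^2 + (((v:ℝ)+1)*((a:ℝ)+2)+1)*ρ + ((v:ℝ)+1) := by
        nlinarith [mul_pos (mul_pos (show (0:ℝ) < (v:ℝ)+1 by linarith) hρpos)
          (show (0:ℝ) < (a:ℝ)+2-ρ by linarith), hρpos, hv0']
      nlinarith [hA, hRHS, hρpos]
    · nlinarith [mul_pos hρpos (show (0:ℝ) < ρ - ((w:ℝ)-((a:ℝ)+1)*((v:ℝ)+1)) by linarith)]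
  · -- r = ρ'
    constructor
    · have h1 : 0 ≤ ((v:ℝ)+1)*(ρ'^2-1) := by
        apply mul_nonneg (by linarith)
        nlinarith [hb2.2]
      have h2' : 0 ≤ ((a:ℝ)+1)*((v:ℝ)+1)*(-ρ'-1) := by
        apply mul_nonneg (by nlinarith) (by linarith [hb2.2])
      nlinarith [h1, h2']
    · nlinarith [mul_pos (show (0:ℝ) < (w:ℝ)-((a:ℝ)+1)*((v:ℝ)+1) by linarith)
        (show (0:ℝ) < -ρ' by linarith [hb2.2]), sq_nonneg ρ']
  · -- r = ρ''
    constructor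
    · have hF : (-(v:ℝ) - ((a:ℝ)+1)*((v:ℝ)+1)*ρ'' + ((v:ℝ)+1)*ρ''^2) * ((1+ρ)^2*ρ)
          = ((a:ℝ)-(v:ℝ)+1)*ρ^2 + ((a:ℝ)-2*(v:ℝ)+2)*ρ - (v:ℝ) := by
        linear_combination ((((v:ℝ)+1)*(ρ''*(1+ρ)-1) - ((a:ℝ)+1)*((v:ℝ)+1)*(1+ρ))*ρ)*hkey - (v:ℝ)*hρ
      have hS1 : 0 < ((a:ℝ)-(v:ℝ)+1)*ρ^2 + ((a:ℝ)-2*(v:ℝ)+2)*ρ - (v:ℝ) := by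
        nlinarith [mul_nonneg (mul_nonneg (show (0:ℝ) ≤ (a:ℝ)-(v:ℝ)+1 by linarith) hρpos.le)
            (show (0:ℝ) ≤ ρ-((a:ℝ)+1) by linarith),
          mul_nonneg (mul_nonneg (show (0:ℝ) ≤ (a:ℝ)+3 by linarith)
            (show (0:ℝ) ≤ (a:ℝ)-(v:ℝ) by linarith)) hρpos.le, hb1, hρpos]
      have hm : 0 < (1+ρ)^2*ρ := mul_pos (pow_pos (by linarith) 2) hρpos
      nlinarith [hF, hS1, hm]
    · nlinarith [mul_pos (show (0:ℝ) < (w:ℝ)-((a:ℝ)+1)*((v:ℝ)+1) by linarith)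
        (show (0:ℝ) < -ρ'' by linarith [hb3.2]), sq_nonneg ρ'']
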